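/- For every graph G with treewidth at most t and any signature σ, the chromatic number of the strong exact-distance -2 graph of (G,σ) is at most (t+1)·2^t. -/

import Mathlib

open SimpleGraph

/-- The number of negative edges of a walk, where `σ e = true` means edge `e` is negative. -/
def negCount {V : Type} {G : SimpleGraph V} (σ : Sym2 V → Bool) {x y : V}
    (p : G.Walk x y) : ℕ :=
  (p.edges.filter (fun e => σ e)).length

/-- A walk is negative if it contains an odd number of negative edges. -/
def IsNegWalk {V : Type} {G : SimpleGraph V} (σ : Sym2 V → Bool) {x y : V}
    (p : G.Walk x y) : Prop :=
  Odd (negCount σ p)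

/-- The exact-distance `-k` graph of the signed graph `(G, σ)`:
`xy` is an edge iff `d_G(x,y) = k` and every `xy`-path of length `k` is negative. -/
def exactDistNeg {V : Type} (G : SimpleGraph V) (σ : Sym2 V → Bool) (k : ℕ) :
    SimpleGraph V :=
  SimpleGraph.fromRel (fun x y =>
    G.dist x y = k ∧ ∀ p : G.Walk x y, p.IsPath → p.length = k → IsNegWalk σ p)

/-- The strong exact-distance `-k` graph of the signed graph `(G, σ)`:
`xy` is an edge iff `d_G(x,y) = k` and some `xy`-path of length `k` is negative. -/
def strongExactDistNeg {V : Type} (G : SimpleGraph V) (σ : Sym2 V → Bool) (k : ℕ) :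
    SimpleGraph V :=
  SimpleGraph.fromRel (fun x y =>
    G.dist x y = k ∧ ∃ p : G.Walk x y, p.IsPath ∧ p.length = k ∧ IsNegWalk σ p)

/-- `WReach G L k y` : the set of vertices weakly `k`-reachable from `y` w.r.t. ordering `L`. -/
def WReach {V : Type} (G : SimpleGraph V) (L : LinearOrder V) (k : ℕ) (y : V) : Set V :=
  {x | ∃ p : G.Walk x y, p.IsPath ∧ p.length ≤ k ∧ ∀ z ∈ p.support, L.le x z}

/-- The weak `k`-colouring number of `G`. -/
noncomputable def wcol {V : Type} (G : SimpleGraph V) (k : ℕ) : ℕ :=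
  ⨅ L : LinearOrder V, ⨆ y : V, (WReach G L k y).ncard

/-- `DReach G L k y` : the set of vertices `x` such that there is an `xy`-path
`z_0, …, z_s` (`x = z_0`, `y = z_s`) of length `s ≤ k` on which `x` is the `L`-minimum
and `y ≤_L z_i` for all `⌊k/2⌋ + 1 ≤ i ≤ s`. -/
def DReach {V : Type} (G : SimpleGraph V) (L : LinearOrder V) (k : ℕ) (y : V) : Set V :=
  {x | ∃ p : G.Walk x y, p.IsPath ∧ p.length ≤ k ∧ (∀ z ∈ p.support, L.le x z) ∧
        ∀ i, k / 2 + 1 ≤ i → i ≤ p.length → L.le y (p.support.getD i y)}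

/-- The distance-`k`-colouring number of `G`. -/
noncomputable def dcol {V : Type} (G : SimpleGraph V) (k : ℕ) : ℕ :=
  ⨅ L : LinearOrder V, ⨆ y : V, (DReach G L k y).ncard

/-- `SReach G L k y` : the set of vertices strongly `k`-reachable from `y` w.r.t. `L`. -/
def SReach {V : Type} (G : SimpleGraph V) (L : LinearOrder V) (k : ℕ) (y : V) : Set V :=
  {x | ∃ p : G.Walk x y, p.IsPath ∧ p.length ≤ k ∧ (∀ z ∈ p.support, L.le x z) ∧
        ∀ z ∈ p.support, z ≠ x → L.le y z}

/-- The strong `k`-colouring number of `G`. -/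
noncomputable def scol {V : Type} (G : SimpleGraph V) (k : ℕ) : ℕ :=
  ⨅ L : LinearOrder V, ⨆ y : V, (SReach G L k y).ncard

/-- `H` is a minor of `G` (branch-set definition). -/
def IsMinor {W V : Type} (H : SimpleGraph W) (G : SimpleGraph V) : Prop :=
  ∃ B : W → Set V,
    (∀ w, (B w).Nonempty) ∧
    (∀ w, (G.induce (B w)).Connected) ∧
    (Pairwise (Function.onFun Disjoint B)) ∧
    ∀ w w', H.Adj w w' → ∃ u ∈ B w, ∃ v ∈ B w', G.Adj u v

/-- `G` is planar iff it has no `K₅` and no `K₃,₃` minor (Wagner's theorem). -/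
def IsPlanar {V : Type} (G : SimpleGraph V) : Prop :=
  ¬ IsMinor (completeGraph (Fin 5)) G ∧
  ¬ IsMinor (completeBipartiteGraph (Fin 3) (Fin 3)) G

/-- `G` is outerplanar iff it has no `K₄` and no `K₂,₃` minor. -/
def IsOuterplanar {V : Type} (G : SimpleGraph V) : Prop :=
  ¬ IsMinor (completeGraph (Fin 4)) G ∧
  ¬ IsMinor (completeBipartiteGraph (Fin 2) (Fin 3)) G

/-- `G` has treewidth at most `t` (tree-decomposition definition). -/
def HasTreewidthLE {V : Type} (G : SimpleGraph V) (t : ℕ) : Prop :=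
  ∃ (ι : Type) (T : SimpleGraph ι) (B : ι → Finset V),
    T.Connected ∧ T.IsAcyclic ∧
    (∀ v, ∃ i, v ∈ B i) ∧
    (∀ u v, G.Adj u v → ∃ i, u ∈ B i ∧ v ∈ B i) ∧
    (∀ v, (T.induce {i | v ∈ B i}).Connected) ∧
    (∀ i, (B i).card ≤ t + 1)

/-! ### Auxiliary development -/

section TreeAux

open SimpleGraph

variable {ι : Type} [DecidableEq ι] {T : SimpleGraph ι}

private lemma tree_path_unique (hTa : T.IsAcyclic) {a b : ι} (p q : T.Walk a b)
    (hp : p.IsPath) (hq : q.IsPath) : p = q := by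
  have := (SimpleGraph.isAcyclic_iff_path_unique.mp hTa) (⟨p, hp⟩ : T.Path a b) ⟨q, hq⟩
  exact congrArg Subtype.val this

private lemma tree_length_eq_dist (hTc : T.Connected) (hTa : T.IsAcyclic) {a b : ι}
    (p : T.Walk a b) (hp : p.IsPath) : p.length = T.dist a b := by
  refine le_antisymm ?_ (SimpleGraph.dist_le p)
  obtain ⟨w, hw⟩ := (hTc.preconnected a b).exists_walk_length_eq_dist
  have h1 : p = w.bypass := tree_path_unique hTa p w.bypass hp w.bypass_isPath
  rw [h1, ← hw]
  exact Walk.length_bypass_le w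

private lemma support_in_set (hTa : T.IsAcyclic) {s : Set ι}
    (hs : (T.induce s).Connected) {i j : ι} (hi : i ∈ s) (hj : j ∈ s)
    (p : T.Walk i j) (hp : p.IsPath) : ∀ x ∈ p.support, x ∈ s := by
  obtain ⟨w⟩ := hs.preconnected ⟨i, hi⟩ ⟨j, hj⟩
  let w' : T.Walk i j := w.map (SimpleGraph.Embedding.induce s).toHom
  have hsup : ∀ x ∈ w'.support, x ∈ s := by
    intro x hx
    have hx2 : x ∈ w.support.map (SimpleGraph.Embedding.induce (G := T) s).toHom := by
      rw [← Walk.support_map]; exact hx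
    rw [List.mem_map] at hx2
    obtain ⟨⟨y, hy⟩, _, rfl⟩ := hx2
    exact hy
  have hpe : p = w'.bypass := tree_path_unique hTa p w'.bypass hp w'.bypass_isPath
  intro x hx
  rw [hpe] at hx
  exact hsup x (w'.support_bypass_subset hx)

private lemma exists_walk_in {s : Set ι} (hs : (T.induce s).Connected) {i j : ι}
    (hi : i ∈ s) (hj : j ∈ s) : ∃ w : T.Walk i j, ∀ x ∈ w.support, x ∈ s := by
  obtain ⟨w⟩ := hs.preconnected ⟨i, hi⟩ ⟨j, hj⟩
  refine ⟨w.map (SimpleGraph.Embedding.induce s).toHom, ?_⟩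
  intro x hx
  have hx2 : x ∈ w.support.map (SimpleGraph.Embedding.induce (G := T) s).toHom := by
    rw [← Walk.support_map]; exact hx
  rw [List.mem_map] at hx2
  obtain ⟨⟨y, hy⟩, _, rfl⟩ := hx2
  exact hy

private lemma step_lemma (hTc : T.Connected) (hTa : T.IsAcyclic) {r a : ι} {s : Set ι}
    {x x' : ι} (hx' : x' ∈ s)
    (hmin : ∀ j ∈ s, T.dist r a ≤ T.dist r j) (hadj : T.Adj x x')
    (hind : ∀ p : T.Walk r x, p.IsPath → a ∈ p.support) :
    ∀ q : T.Walk r x', q.IsPath → a ∈ q.support := by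
  classical
  intro q hq
  by_cases hxs : x ∈ q.support
  · exact q.support_takeUntil_subset hxs (hind (q.takeUntil x hxs) (hq.takeUntil hxs))
  · have hcp : (q.concat hadj.symm).IsPath := by
      rw [← Walk.isPath_reverse_iff, Walk.reverse_concat, Walk.cons_isPath_iff]
      exact ⟨hq.reverse, by simpa using hxs⟩
    have hmem := hind (q.concat hadj.symm) hcp
    rw [Walk.support_concat, List.mem_append] at hmem
    rcases hmem with h | h
    · exact h
    · exfalso
      simp only [List.mem_singleton] at h
      subst h
      have h1 : q.length = T.dist r x' := tree_length_eq_dist hTc hTa q hq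
      have h2 : (q.concat hadj.symm).length = T.dist r a := tree_length_eq_dist hTc hTa _ hcp
      rw [Walk.length_concat] at h2
      have h3 := hmin x' hx'
      omega

private lemma propagate_lemma (hTc : T.Connected) (hTa : T.IsAcyclic) {r a : ι} {s : Set ι}
    (hmin : ∀ j ∈ s, T.dist r a ≤ T.dist r j) :
    ∀ {x j : ι} (w : T.Walk x j), (∀ y ∈ w.support, y ∈ s) →
      (∀ p : T.Walk r x, p.IsPath → a ∈ p.support) →
      ∀ q : T.Walk r j, q.IsPath → a ∈ q.support := by
  intro x j w
  induction w with
  | nil => intro _ h; exact h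
  | cons hadj w ih =>
    intro hsup hind
    refine ih ?_ (step_lemma hTc hTa ?_ hmin hadj hind)
    · intro y hy; exact hsup y (by simp [hy])
    · exact hsup _ (by simp)

private lemma top_on_path (hTc : T.Connected) (hTa : T.IsAcyclic) {r a : ι} {s : Set ι}
    (hs : (T.induce s).Connected) (ha : a ∈ s)
    (hmin : ∀ j ∈ s, T.dist r a ≤ T.dist r j) {j : ι} (hj : j ∈ s) :
    ∀ q : T.Walk r j, q.IsPath → a ∈ q.support := by
  obtain ⟨w, hw⟩ := exists_walk_in hs ha hj
  exact propagate_lemma hTc hTa hmin w hw (fun p _ => p.end_mem_support)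

private lemma bag_mem_of_le (hTc : T.Connected) (hTa : T.IsAcyclic) {r : ι} {su sv : Set ι}
    (hsu : (T.induce su).Connected) (hsv : (T.induce sv).Connected)
    {au av : ι} (hau : au ∈ su) (hav : av ∈ sv)
    (hminu : ∀ j ∈ su, T.dist r au ≤ T.dist r j)
    (hminv : ∀ j ∈ sv, T.dist r av ≤ T.dist r j)
    {i : ι} (hiu : i ∈ su) (hiv : i ∈ sv)
    (hle : T.dist r au ≤ T.dist r av) : av ∈ su := by
  classical
  obtain ⟨w0⟩ := hTc.preconnected r i
  set p := w0.bypass with hp_def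
  have hp : p.IsPath := w0.bypass_isPath
  have hau_p : au ∈ p.support := top_on_path hTc hTa hsu hau hminu hiu p hp
  have hav_p : av ∈ p.support := top_on_path hTc hTa hsv hav hminv hiv p hp
  have hq2path : (p.dropUntil au hau_p).IsPath := hp.dropUntil hau_p
  have key : av ∈ (p.dropUntil au hau_p).support := by
    by_cases hc : av ∈ (p.dropUntil au hau_p).support
    · exact hc
    · have hin1 : av ∈ (p.takeUntil au hau_p).support := by
        have hms := hav_p
        rw [← p.take_spec hau_p, Walk.mem_support_append_iff] at hms
        tauto
      have hq1 : (p.takeUntil au hau_p).IsPath := hp.takeUntil hau_p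
      have e1 : (p.takeUntil au hau_p).length = T.dist r au :=
        tree_length_eq_dist hTc hTa _ hq1
      have e2 : ((p.takeUntil au hau_p).takeUntil av hin1).length = T.dist r av :=
        tree_length_eq_dist hTc hTa _ (hq1.takeUntil hin1)
      have e3 : ((p.takeUntil au hau_p).takeUntil av hin1).length
          + ((p.takeUntil au hau_p).dropUntil av hin1).length
          = (p.takeUntil au hau_p).length := by
        rw [← Walk.length_append, (p.takeUntil au hau_p).take_spec hin1]
      have e4 : ((p.takeUntil au hau_p).dropUntil av hin1).length = 0 := by omega
      have hav_eq : av = au := Walk.eq_of_length_eq_zero e4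
      rw [hav_eq]
      exact Walk.start_mem_support _
  exact support_in_set hTa hsu hau hiu (p.dropUntil au hau_p) hq2path av key

end TreeAux

section ColorAux

open SimpleGraph

attribute [local instance] Classical.propDecidable

variable {V : Type} [Fintype V]

private noncomputable def pickCol (t : ℕ) (s : Finset (Fin (t + 1))) : Fin (t + 1) :=
  if h : sᶜ.Nonempty then h.choose else ⟨0, Nat.succ_pos t⟩

private lemma pickCol_not_mem {t : ℕ} {s : Finset (Fin (t + 1))} (hs : s.card ≤ t) :
    pickCol t s ∉ s := by
  have hcompl : sᶜ.Nonempty := by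
    rw [← Finset.card_pos, Finset.card_compl]
    simp only [Fintype.card_fin]
    omega
  rw [pickCol, dif_pos hcompl]
  have := hcompl.choose_spec
  rwa [Finset.mem_compl] at this

private noncomputable def gcol (t : ℕ) (π : V → ℕ) (Bag : V → Finset V) (v : V) :
    Fin (t + 1) :=
  pickCol t (((Bag v).filter (fun u => π u < π v)).attach.image (fun u => gcol t π Bag u.1))
termination_by π v
decreasing_by
  have h2 := u.2
  rw [Finset.mem_filter] at h2
  exact h2.2

private lemma gcol_ne {t : ℕ} {π : V → ℕ} {Bag : V → Finset V}
    (hmem : ∀ v, v ∈ Bag v) (hcard : ∀ v, (Bag v).card ≤ t + 1)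
    {u v : V} (hlt : π u < π v) (hu : u ∈ Bag v) :
    gcol t π Bag v ≠ gcol t π Bag u := by
  intro heq
  have hsub : (Bag v).filter (fun u => π u < π v) ⊆ (Bag v).erase v := by
    intro w hw
    rw [Finset.mem_filter] at hw
    refine Finset.mem_erase.mpr ⟨?_, hw.1⟩
    intro h
    subst h
    exact absurd hw.2 (lt_irrefl _)
  have hcard2 : ((((Bag v).filter (fun u => π u < π v)).attach).image
      (fun u => gcol t π Bag u.1)).card ≤ t := by
    calc ((((Bag v).filter (fun u => π u < π v)).attach).image
        (fun u => gcol t π Bag u.1)).card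
        ≤ (((Bag v).filter (fun u => π u < π v)).attach).card := Finset.card_image_le
      _ = ((Bag v).filter (fun u => π u < π v)).card := Finset.card_attach
      _ ≤ ((Bag v).erase v).card := Finset.card_le_card hsub
      _ = (Bag v).card - 1 := Finset.card_erase_of_mem (hmem v)
      _ ≤ t := by have := hcard v; omega
  have hnm := pickCol_not_mem hcard2
  apply hnm
  have hveq : gcol t π Bag v = pickCol t ((((Bag v).filter (fun u => π u < π v)).attach).image
      (fun u => gcol t π Bag u.1)) := by
    conv_lhs => rw [gcol]
  rw [← hveq, heq]
  exact Finset.mem_image.mpr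
    ⟨⟨u, Finset.mem_filter.mpr ⟨hu, hlt⟩⟩, Finset.mem_attach _ _, rfl⟩

private noncomputable def fsgn (G : SimpleGraph V) (σ : Sym2 V → Bool) (t : ℕ) (π : V → ℕ)
    (Bag : V → Finset V) (v : V) (j : Fin (t + 1)) : Bool :=
  if h : ∃ u, G.Adj u v ∧ π u < π v ∧ gcol t π Bag u = j then
    xor (fsgn G σ t π Bag h.choose (gcol t π Bag v)) (σ s(h.choose, v))
  else false
termination_by π v
decreasing_by exact h.choose_spec.2.1

variable {G : SimpleGraph V} {σ : Sym2 V → Bool} {t : ℕ} {π : V → ℕ} {Bag : V → Finset V}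

private lemma smaller_nb_unique
    (hπ : Function.Injective π)
    (hmem : ∀ v, v ∈ Bag v) (hcard : ∀ v, (Bag v).card ≤ t + 1)
    (hreach2 : ∀ u z v, π u < π v → π v ≤ π z → G.Adj u z → G.Adj z v → u ∈ Bag v)
    {u u' v : V} (h1 : G.Adj u v) (h2 : G.Adj u' v) (l1 : π u < π v) (l2 : π u' < π v)
    (hc : gcol t π Bag u = gcol t π Bag u') : u = u' := by
  by_contra hne
  rcases lt_trichotomy (π u) (π u') with h | h | h
  · exact (gcol_ne hmem hcard h (hreach2 u v u' h l2.le h1 h2.symm)) hc.symm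
  · exact hne (hπ h)
  · exact (gcol_ne hmem hcard h (hreach2 u' v u h l1.le h2 h1.symm)) hc

private lemma fsgn_eq
    (hπ : Function.Injective π)
    (hmem : ∀ v, v ∈ Bag v) (hcard : ∀ v, (Bag v).card ≤ t + 1)
    (hreach2 : ∀ u z v, π u < π v → π v ≤ π z → G.Adj u z → G.Adj z v → u ∈ Bag v)
    {u v : V} (h1 : G.Adj u v) (hlt : π u < π v) :
    fsgn G σ t π Bag v (gcol t π Bag u)
      = xor (fsgn G σ t π Bag u (gcol t π Bag v)) (σ s(u, v)) := by
  have hex : ∃ w, G.Adj w v ∧ π w < π v ∧ gcol t π Bag w = gcol t π Bag u := ⟨u, h1, hlt, rfl⟩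
  conv_lhs => rw [fsgn]
  rw [dif_pos hex]
  have hspec := hex.choose_spec
  have heq : hex.choose = u :=
    smaller_nb_unique hπ hmem hcard hreach2 hspec.1 h1 hspec.2.1 hlt hspec.2.2
  rw [heq]

private lemma adj_gcol_ne
    (hπ : Function.Injective π)
    (hmem : ∀ v, v ∈ Bag v) (hcard : ∀ v, (Bag v).card ≤ t + 1)
    (hreach1 : ∀ u v, π u < π v → G.Adj u v → u ∈ Bag v)
    {u v : V} (h : G.Adj u v) : gcol t π Bag u ≠ gcol t π Bag v := by
  rcases lt_trichotomy (π u) (π v) with h' | h' | h'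
  · exact (gcol_ne hmem hcard h' (hreach1 u v h' h)).symm
  · exact absurd (hπ h') h.ne
  · exact gcol_ne hmem hcard h' (hreach1 v u h' h.symm)

private lemma bool_aux : ∀ a b c : Bool, b ≠ c → a ≠ xor (xor a b) c := by decide

private lemma bool_aux2 : ∀ a b c : Bool, xor a b = xor a c → b = c := by decide

private lemma between_ne
    (hπ : Function.Injective π)
    (hmem : ∀ v, v ∈ Bag v) (hcard : ∀ v, (Bag v).card ≤ t + 1)
    (hreach2 : ∀ u z v, π u < π v → π v ≤ π z → G.Adj u z → G.Adj z v → u ∈ Bag v)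
    {x y z : V} (hxz : G.Adj x z) (hzy : G.Adj z y)
    (h1 : π x < π z) (h2 : π z < π y)
    (hcc : gcol t π Bag x = gcol t π Bag y)
    (hσ : σ s(x, z) ≠ σ s(z, y)) :
    fsgn G σ t π Bag x (gcol t π Bag z) ≠ fsgn G σ t π Bag y (gcol t π Bag z) := by
  have e1 : fsgn G σ t π Bag y (gcol t π Bag z)
      = xor (fsgn G σ t π Bag z (gcol t π Bag y)) (σ s(z, y)) :=
    fsgn_eq hπ hmem hcard hreach2 hzy h2
  have e2 : fsgn G σ t π Bag z (gcol t π Bag x)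
      = xor (fsgn G σ t π Bag x (gcol t π Bag z)) (σ s(x, z)) :=
    fsgn_eq hπ hmem hcard hreach2 hxz h1
  rw [e1, ← hcc, e2]
  exact bool_aux _ _ _ hσ

private lemma exists_mid {x y : V}
    (h : (strongExactDistNeg G σ 2).Adj x y) :
    x ≠ y ∧ ∃ z, G.Adj x z ∧ G.Adj z y ∧ σ s(x, z) ≠ σ s(z, y) := by
  rw [strongExactDistNeg, SimpleGraph.fromRel_adj] at h
  obtain ⟨hne, hrel⟩ := h
  have main : ∀ a b : V, (∃ p : G.Walk a b, p.IsPath ∧ p.length = 2 ∧ IsNegWalk σ p) →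
      ∃ z, G.Adj a z ∧ G.Adj z b ∧ σ s(a, z) ≠ σ s(z, b) := by
    rintro a b ⟨p, hp, hlen, hneg⟩
    cases p with
    | nil => simp at hlen
    | cons h1 q =>
      rename_i w
      cases q with
      | nil => simp at hlen
      | cons h2 q2 =>
        rename_i w2
        cases q2 with
        | nil =>
          refine ⟨w, h1, h2, ?_⟩
          simp only [IsNegWalk, negCount, Walk.edges_cons, Walk.edges_nil] at hneg
          intro hcontra
          rcases Bool.dichotomy (σ s(w, b)) with hb | hb <;>
            rw [hb] at hcontra <;>
            simp [hcontra, hb, Nat.odd_iff] at hneg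
        | cons h3 q3 =>
          exfalso
          have : q3.length + 3 = 2 := by simpa using hlen
          omega
  rcases hrel with ⟨-, hp⟩ | ⟨-, hp⟩
  · exact ⟨hne, main x y hp⟩
  · obtain ⟨z, ha1, ha2, ha3⟩ := main y x hp
    refine ⟨hne, z, ha2.symm, ha1.symm, ?_⟩
    rw [show s(x, z) = s(z, x) from Sym2.eq_swap, show s(z, y) = s(y, z) from Sym2.eq_swap]
    exact ha3.symm

private theorem abstract_colorable (G : SimpleGraph V) (σ : Sym2 V → Bool) (t : ℕ)
    (π : V → ℕ) (Bag : V → Finset V)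
    (hπ : Function.Injective π)
    (hmem : ∀ v, v ∈ Bag v) (hcard : ∀ v, (Bag v).card ≤ t + 1)
    (hreach1 : ∀ u v, π u < π v → G.Adj u v → u ∈ Bag v)
    (hreach2 : ∀ u z v, π u < π v → π v ≤ π z → G.Adj u z → G.Adj z v → u ∈ Bag v) :
    (strongExactDistNeg G σ 2).Colorable ((t + 1) * 2 ^ t) := by
  classical
  let φ : V → Fin (t + 1) × (Fin t → Bool) :=
    fun v => (gcol t π Bag v, fun k => fsgn G σ t π Bag v ((gcol t π Bag v).succAbove k))
  have hφ : ∀ {x y : V}, (strongExactDistNeg G σ 2).Adj x y → φ x ≠ φ y := by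
    intro x y hadj heq
    obtain ⟨hxy, z, hxz, hzy, hσ⟩ := exists_mid hadj
    have hcc : gcol t π Bag x = gcol t π Bag y := congrArg Prod.fst heq
    have hsnd : (fun k : Fin t => fsgn G σ t π Bag x ((gcol t π Bag x).succAbove k))
        = (fun k : Fin t => fsgn G σ t π Bag y ((gcol t π Bag y).succAbove k)) :=
      congrArg Prod.snd heq
    have hff : ∀ j, j ≠ gcol t π Bag x → fsgn G σ t π Bag x j = fsgn G σ t π Bag y j := by
      intro j hj
      obtain ⟨k, hk⟩ := Fin.exists_succAbove_eq hj
      have h1 := congrFun hsnd k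
      rw [← hcc] at h1
      rw [hk] at h1
      exact h1
    have hjz : gcol t π Bag z ≠ gcol t π Bag x :=
      adj_gcol_ne hπ hmem hcard hreach1 hxz.symm
    have hπzx : π z ≠ π x := fun e => hxz.ne' (hπ e)
    have hπzy : π z ≠ π y := fun e => hzy.ne (hπ e)
    rcases lt_or_gt_of_ne hπzx with hA | hA
    · rcases lt_or_gt_of_ne hπzy with hB | hB
      · have e1 : fsgn G σ t π Bag x (gcol t π Bag z)
            = xor (fsgn G σ t π Bag z (gcol t π Bag x)) (σ s(z, x)) :=
          fsgn_eq hπ hmem hcard hreach2 hxz.symm hA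
        have e2 : fsgn G σ t π Bag y (gcol t π Bag z)
            = xor (fsgn G σ t π Bag z (gcol t π Bag y)) (σ s(z, y)) :=
          fsgn_eq hπ hmem hcard hreach2 hzy hB
        have h3 := hff (gcol t π Bag z) hjz
        rw [e1, e2, ← hcc] at h3
        have h4 : σ s(z, x) = σ s(z, y) := bool_aux2 _ _ _ h3
        rw [show s(z, x) = s(x, z) from Sym2.eq_swap] at h4
        exact hσ h4
      · have hσ' : σ s(y, z) ≠ σ s(z, x) := by
          rw [show s(y, z) = s(z, y) from Sym2.eq_swap,
            show s(z, x) = s(x, z) from Sym2.eq_swap]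
          exact hσ.symm
        have hbt := between_ne hπ hmem hcard hreach2 hzy.symm hxz.symm hB hA hcc.symm hσ'
        exact hbt (hff (gcol t π Bag z) hjz).symm
    · rcases lt_or_gt_of_ne hπzy with hB | hB
      · have hbt := between_ne hπ hmem hcard hreach2 hxz hzy hA hB hcc hσ
        exact hbt (hff (gcol t π Bag z) hjz)
      · exact hxy (smaller_nb_unique hπ hmem hcard hreach2 hxz hzy.symm hA hB hcc)
  have C : (strongExactDistNeg G σ 2).Coloring (Fin (t + 1) × (Fin t → Bool)) :=
    SimpleGraph.Coloring.mk φ hφ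
  have hcardC : Fintype.card (Fin (t + 1) × (Fin t → Bool)) = (t + 1) * 2 ^ t := by
    simp [Fintype.card_fun]
  have := C.colorable
  rwa [hcardC] at this

end ColorAux

theorem strongExactDistNeg_two_chromatic_le_of_treewidth
    {V : Type} [Fintype V] (G : SimpleGraph V) (σ : Sym2 V → Bool) (t : ℕ)
    (htw : HasTreewidthLE G t) :
    (strongExactDistNeg G σ 2).chromaticNumber ≤ (((t + 1) * 2 ^ t : ℕ) : ℕ∞) := by
  classical
  obtain ⟨ι, T, B, hTc, hTa, hcov, hedge, hsub, hcardB⟩ := htw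
  cases isEmpty_or_nonempty V with
  | inl hV =>
    have hcol : (strongExactDistNeg G σ 2).Colorable ((t + 1) * 2 ^ t) :=
      ⟨SimpleGraph.Coloring.mk (fun v => isEmptyElim v) (fun {v w} _ => isEmptyElim v)⟩
    exact hcol.chromaticNumber_le
  | inr hV =>
    obtain ⟨r, -⟩ := hcov (Classical.arbitrary V)
    have htop : ∀ v : V, ∃ i, v ∈ B i ∧ ∀ j, v ∈ B j → T.dist r i ≤ T.dist r j := by
      intro v
      have hne : {n : ℕ | ∃ i, v ∈ B i ∧ T.dist r i = n}.Nonempty := by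
        obtain ⟨i, hi⟩ := hcov v
        exact ⟨T.dist r i, i, hi, rfl⟩
      obtain ⟨i, hi, hdi⟩ := Nat.sInf_mem hne
      refine ⟨i, hi, fun j hj => ?_⟩
      rw [hdi]
      exact Nat.sInf_le ⟨j, hj, rfl⟩
    choose top htopmem htopmin using htop
    have hR : ∀ u v : V, T.dist r (top u) ≤ T.dist r (top v) →
        ∀ i, u ∈ B i → v ∈ B i → u ∈ B (top v) := by
      intro u v hle i hiu hiv
      exact bag_mem_of_le hTc hTa (hsub u) (hsub v) (htopmem u) (htopmem v)
        (fun j hj => htopmin u j hj) (fun j hj => htopmin v j hj) hiu hiv hle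
    have hR1 : ∀ u v : V, T.dist r (top u) ≤ T.dist r (top v) → G.Adj u v →
        u ∈ B (top v) := by
      intro u v hle hadj
      obtain ⟨i, hiu, hiv⟩ := hedge u v hadj
      exact hR u v hle i hiu hiv
    have hR2 : ∀ u z v : V, T.dist r (top u) ≤ T.dist r (top v) →
        T.dist r (top v) ≤ T.dist r (top z) → G.Adj u z → G.Adj z v → u ∈ B (top v) := by
      intro u z v h1 h2 huz hzv
      obtain ⟨i, hiu, hiz⟩ := hedge u z huz
      obtain ⟨j, hjz, hjv⟩ := hedge z v hzv
      have hv : v ∈ B (top z) := hR v z h2 j hjv hjz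
      have hu : u ∈ B (top z) := hR u z (h1.trans h2) i hiu hiz
      exact hR u v h1 (top z) hu hv
    set n := Fintype.card V with hn
    have hn0 : 0 < n := Fintype.card_pos
    set e := Fintype.equivFin V with he
    set π : V → ℕ := fun v => T.dist r (top v) * n + (e v).val with hπdef
    have hπd : ∀ a b : V, π a ≤ π b → T.dist r (top a) ≤ T.dist r (top b) := by
      intro a b h
      by_contra hlt
      push_neg at hlt
      have ha : (e a).val < n := (e a).isLt
      have hb : (e b).val < n := (e b).isLt
      have key : T.dist r (top b) * n + n ≤ T.dist r (top a) * n := by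
        have h2 := Nat.mul_le_mul_right n (Nat.succ_le_of_lt hlt)
        calc T.dist r (top b) * n + n = (T.dist r (top b) + 1) * n := by ring
          _ ≤ T.dist r (top a) * n := h2
      simp only [hπdef] at h
      linarith
    have hπinj : Function.Injective π := by
      intro a b hab
      have h1 : T.dist r (top a) ≤ T.dist r (top b) := hπd a b hab.le
      have h2 : T.dist r (top b) ≤ T.dist r (top a) := hπd b a hab.ge
      have h3 : T.dist r (top a) = T.dist r (top b) := le_antisymm h1 h2
      have h4 : (e a).val = (e b).val := by
        simp only [hπdef, h3] at hab
        omega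
      exact e.injective (Fin.ext h4)
    have hcol := abstract_colorable G σ t π (fun v => B (top v)) hπinj
      (fun v => htopmem v) (fun v => hcardB (top v))
      (fun u v hlt hadj => hR1 u v (hπd u v hlt.le) hadj)
      (fun u z v h1 h2 huz hzv => hR2 u z v (hπd u v h1.le) (hπd v z h2) huz hzv)
    exact hcol.chromaticNumber_le
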